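/- If the one-sided local crossing number of (G, <_X) is k, then the 2-layer drawing returned by the median heuristic variant A has local crossing number at most 3k, i.e., variant A is a 3-approximation for One-Sided Local Crossing Minimization. -/
import Mathlib


open scoped Classical

/-- Edges `e` and `f` cross in the 2-layer drawing where `Y` is ordered by the
position map `ord` (i.e. `y₁ <ᵧ y₂ ↔ ord y₁ < ord y₂`). -/
def tlCross {X Y : Type*} [LinearOrder X] (ord : Y → ℕ) (e f : X × Y) : Prop :=
  (e.1 < f.1 ∧ ord f.2 < ord e.2) ∨ (f.1 < e.1 ∧ ord e.2 < ord f.2)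

/-- Number of edges of `E` crossing the edge `e` in the drawing given by `ord`. -/
noncomputable def tlCrN {X Y : Type*} [LinearOrder X] (E : Finset (X × Y))
    (ord : Y → ℕ) (e : X × Y) : ℕ :=
  (E.filter (tlCross ord e)).card

/-- Local crossing number of the drawing of `E` given by `ord`: the maximum,
over all edges, of the number of edges crossing it. -/
noncomputable def tlLcr {X Y : Type*} [LinearOrder X] (E : Finset (X × Y))
    (ord : Y → ℕ) : ℕ :=
  E.sup (tlCrN E ord)

/-- Neighborhood in `X` of a vertex `y ∈ Y`. -/
noncomputable def tlNbrs {X Y : Type*} (E : Finset (X × Y)) (y : Y) : Finset X :=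
  (E.filter (fun q => q.2 = y)).image Prod.fst

/-- Degree of a vertex `y ∈ Y`. -/
noncomputable def tlDeg {X Y : Type*} (E : Finset (X × Y)) (y : Y) : ℕ :=
  (tlNbrs E y).card

/-- Tie-breaking rank of `y`: `0` for 2-vertices, `1` for odd vertices, `2` for
`4⁺`-vertices (even degree `≥ 4`). -/
noncomputable def tlRank {X Y : Type*} (E : Finset (X × Y)) (y : Y) : ℕ :=
  if tlDeg E y = 2 then 0 else if Odd (tlDeg E y) then 1 else 2

/-- `med` is the median assignment of variant `A`: `med y` is a neighbor of `y`;
for a 2-vertex the median is rounded up (it is the second neighbor, with exactly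
one neighbor before it), otherwise it is rounded down (the middle neighbor, with
exactly `⌈deg y / 2⌉ - 1` neighbors before it). -/
def tlMedianA {X Y : Type*} [LinearOrder X] (E : Finset (X × Y)) (med : Y → X) : Prop :=
  ∀ y : Y, med y ∈ tlNbrs E y ∧
    (if tlDeg E y = 2 then ((tlNbrs E y).filter (fun w => w < med y)).card = 1
     else ((tlNbrs E y).filter (fun w => w < med y)).card + 1 = (tlDeg E y + 1) / 2)

/-- `ordA` is an order of `Y` produced by variant `A` of the median heuristic:
vertices are ordered by their medians; within a bunch, 2-vertices come first,
sorted ascending by their heavy neighbors `heavy`, then odd vertices, then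
`4⁺`-vertices sorted ascending by degree. -/
def tlVariantA {X Y : Type*} [LinearOrder X] (E : Finset (X × Y))
    (med heavy : Y → X) (ordA : Y → ℕ) : Prop :=
  Function.Injective ordA ∧
  (∀ y₁ y₂ : Y, med y₁ < med y₂ → ordA y₁ < ordA y₂) ∧
  (∀ y₁ y₂ : Y, med y₁ = med y₂ → tlRank E y₁ < tlRank E y₂ → ordA y₁ < ordA y₂) ∧
  (∀ y₁ y₂ : Y, med y₁ = med y₂ → tlDeg E y₁ = 2 → tlDeg E y₂ = 2 →
    heavy y₁ < heavy y₂ → ordA y₁ < ordA y₂) ∧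
  (∀ y₁ y₂ : Y, med y₁ = med y₂ → tlRank E y₁ = 2 → tlRank E y₂ = 2 →
    tlDeg E y₁ < tlDeg E y₂ → ordA y₁ < ordA y₂)

/-- `heavy` assigns to every 2-vertex its heavy neighbor: the unique neighbor
distinct from its median. -/
def tlHeavyNbr {X Y : Type*} [LinearOrder X] (E : Finset (X × Y))
    (med heavy : Y → X) : Prop :=
  ∀ y : Y, tlDeg E y = 2 → heavy y ∈ tlNbrs E y ∧ heavy y ≠ med y

/-- The one-sided local crossing number of `(E, <ₓ)` is `k`: `k` is the minimum,
over all orders of `Y` (injective position maps), of the local crossing number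
of the resulting drawing. -/
def tlOslcr {X Y : Type*} [LinearOrder X] (E : Finset (X × Y)) (k : ℕ) : Prop :=
  IsLeast {m : ℕ | ∃ ord : Y → ℕ, Function.Injective ord ∧ tlLcr E ord = m} k

set_option linter.unusedSectionVars false

section TLAux

variable {X Y : Type*} [LinearOrder X]

lemma mem_tlNbrs {E : Finset (X × Y)} {w : X} {u : Y} :
    w ∈ tlNbrs E u ↔ (w, u) ∈ E := by
  unfold tlNbrs
  simp only [Finset.mem_image, Finset.mem_filter, Prod.exists]
  constructor
  · rintro ⟨a, b, ⟨hE, rfl⟩, rfl⟩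
    exact hE
  · intro h
    exact ⟨w, u, ⟨h, rfl⟩, rfl⟩

/-- number of neighbours of `u` strictly left of `x` -/
noncomputable def tlL (E : Finset (X × Y)) (x : X) (u : Y) : ℕ :=
  ((tlNbrs E u).filter (fun w => w < x)).card

/-- number of neighbours of `u` strictly right of `x` -/
noncomputable def tlR (E : Finset (X × Y)) (x : X) (u : Y) : ℕ :=
  ((tlNbrs E u).filter (fun w => x < w)).card

lemma tlL_mono (E : Finset (X × Y)) {a b : X} (u : Y) (h : a ≤ b) :
    tlL E a u ≤ tlL E b u := by
  unfold tlL
  apply Finset.card_le_card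
  intro w hw
  obtain ⟨h1, h2⟩ := Finset.mem_filter.mp hw
  exact Finset.mem_filter.mpr ⟨h1, lt_of_lt_of_le h2 h⟩

lemma tlR_anti (E : Finset (X × Y)) {a b : X} (u : Y) (h : a ≤ b) :
    tlR E b u ≤ tlR E a u := by
  unfold tlR
  apply Finset.card_le_card
  intro w hw
  obtain ⟨h1, h2⟩ := Finset.mem_filter.mp hw
  exact Finset.mem_filter.mpr ⟨h1, lt_of_le_of_lt h h2⟩

lemma tlL_le_deg (E : Finset (X × Y)) (x : X) (u : Y) : tlL E x u ≤ tlDeg E u :=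
  Finset.card_le_card (Finset.filter_subset _ _)

lemma tlR_le_deg (E : Finset (X × Y)) (x : X) (u : Y) : tlR E x u ≤ tlDeg E u :=
  Finset.card_le_card (Finset.filter_subset _ _)

lemma tlL_gain (E : Finset (X × Y)) {a c : X} {u : Y} (hmem : a ∈ tlNbrs E u)
    (h : a < c) : tlL E a u + 1 ≤ tlL E c u := by
  unfold tlL
  have hsub : insert a ((tlNbrs E u).filter (fun w => w < a))
      ⊆ (tlNbrs E u).filter (fun w => w < c) := by
    intro w hw
    rcases Finset.mem_insert.mp hw with rfl | hw'
    · exact Finset.mem_filter.mpr ⟨hmem, h⟩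
    · obtain ⟨h1, h2⟩ := Finset.mem_filter.mp hw'
      exact Finset.mem_filter.mpr ⟨h1, h2.trans h⟩
  have hcard := Finset.card_le_card hsub
  have h3 : a ∉ (tlNbrs E u).filter (fun w => w < a) :=
    fun hc => absurd (Finset.mem_filter.mp hc).2 (lt_irrefl a)
  rwa [Finset.card_insert_of_notMem h3] at hcard

lemma tlR_gain (E : Finset (X × Y)) {a c : X} {u : Y} (hmem : a ∈ tlNbrs E u)
    (h : c < a) : tlR E a u + 1 ≤ tlR E c u := by
  unfold tlR
  have hsub : insert a ((tlNbrs E u).filter (fun w => a < w))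
      ⊆ (tlNbrs E u).filter (fun w => c < w) := by
    intro w hw
    rcases Finset.mem_insert.mp hw with rfl | hw'
    · exact Finset.mem_filter.mpr ⟨hmem, h⟩
    · obtain ⟨h1, h2⟩ := Finset.mem_filter.mp hw'
      exact Finset.mem_filter.mpr ⟨h1, h.trans h2⟩
  have hcard := Finset.card_le_card hsub
  have h3 : a ∉ (tlNbrs E u).filter (fun w => a < w) :=
    fun hc => absurd (Finset.mem_filter.mp hc).2 (lt_irrefl a)
  rwa [Finset.card_insert_of_notMem h3] at hcard

lemma tl_partition {s : Finset X} {a : X} (ha : a ∈ s) :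
    (s.filter (fun w => w < a)).card + (s.filter (fun w => a < w)).card + 1 = s.card := by
  have h1 := Finset.card_filter_add_card_filter_not (s := s)
    (fun w => w < a)
  have h2 : s.filter (fun w => ¬ w < a) = insert a (s.filter (fun w => a < w)) := by
    ext w
    simp only [Finset.mem_filter, Finset.mem_insert, not_lt]
    constructor
    · rintro ⟨hw, hle⟩
      rcases eq_or_lt_of_le hle with h | h
      · exact Or.inl h.symm
      · exact Or.inr ⟨hw, h⟩
    · rintro (rfl | ⟨hw, h⟩)
      · exact ⟨ha, le_rfl⟩
      · exact ⟨hw, le_of_lt h⟩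
  have h3 : a ∉ s.filter (fun w => a < w) :=
    fun hc => absurd (Finset.mem_filter.mp hc).2 (lt_irrefl a)
  rw [h2, Finset.card_insert_of_notMem h3] at h1
  omega

lemma tlRank_eq_zero {E : Finset (X × Y)} {u : Y} (h : tlRank E u = 0) :
    tlDeg E u = 2 := by
  unfold tlRank at h
  by_cases h1 : tlDeg E u = 2
  · exact h1
  · rw [if_neg h1] at h
    by_cases h2 : Odd (tlDeg E u)
    · rw [if_pos h2] at h
      omega
    · rw [if_neg h2] at h
      omega

lemma tlRank_of_deg2 {E : Finset (X × Y)} {u : Y} (h : tlDeg E u = 2) :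
    tlRank E u = 0 := by
  unfold tlRank
  rw [if_pos h]

lemma tlMedFacts (E : Finset (X × Y)) (med : Y → X)
    (hdeg : ∀ y : Y, 1 ≤ tlDeg E y) (hmed : tlMedianA E med) (u : Y) :
    med u ∈ tlNbrs E u ∧
    tlL E (med u) u + tlR E (med u) u + 1 = tlDeg E u ∧
    tlR E (med u) u ≤ tlL E (med u) u + 1 ∧
    tlL E (med u) u ≤ tlR E (med u) u + 1 ∧
    (tlR E (med u) u = tlL E (med u) u + 1 → 1 ≤ tlL E (med u) u) ∧
    (tlL E (med u) u = tlR E (med u) u + 1 → tlDeg E u = 2) ∧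
    (tlDeg E u = 2 → tlL E (med u) u = 1 ∧ tlR E (med u) u = 0) ∧
    (tlL E (med u) u = 0 → tlDeg E u = 1) ∧
    (tlR E (med u) u = 0 → 1 ≤ tlL E (med u) u → tlDeg E u = 2) := by
  obtain ⟨hmem, hcond⟩ := hmed u
  have hd1 : 1 ≤ tlDeg E u := hdeg u
  have hpart : tlL E (med u) u + tlR E (med u) u + 1 = tlDeg E u := tl_partition hmem
  have key : (tlDeg E u = 2 ∧ tlL E (med u) u = 1) ∨
      (tlDeg E u ≠ 2 ∧ tlL E (med u) u + 1 = (tlDeg E u + 1) / 2) := by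
    by_cases hd : tlDeg E u = 2
    · rw [if_pos hd] at hcond
      exact Or.inl ⟨hd, hcond⟩
    · rw [if_neg hd] at hcond
      exact Or.inr ⟨hd, hcond⟩
  refine ⟨hmem, hpart, ?_, ?_, ?_, ?_, ?_, ?_, ?_⟩ <;>
    rcases key with ⟨h1, h2⟩ | ⟨h1, h2⟩ <;> omega

/-- crossings of `(x,y)` with the edges at `u`, when `u` is left of `y`. -/
lemma tlFib_lt {E : Finset (X × Y)} {ord : Y → ℕ} {x : X} {y u : Y}
    (h : ord u < ord y) :
    (E.filter (fun f => tlCross ord (x, y) f ∧ f.2 = u)).card = tlR E x u := by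
  have hset : E.filter (fun f => tlCross ord (x, y) f ∧ f.2 = u)
      = E.filter (fun f => f.2 = u ∧ x < f.1) := by
    apply Finset.filter_congr
    intro f _
    unfold tlCross
    constructor
    · rintro ⟨hc | hc, hu⟩
      · exact ⟨hu, hc.1⟩
      · rw [hu] at hc
        exact absurd hc.2 (lt_asymm h)
    · rintro ⟨hu, hx⟩
      exact ⟨Or.inl ⟨hx, by rw [hu]; exact h⟩, hu⟩
  have himg : (tlNbrs E u).filter (fun w => x < w)
      = (E.filter (fun f => f.2 = u ∧ x < f.1)).image Prod.fst := by
    ext w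
    simp only [Finset.mem_filter, Finset.mem_image, mem_tlNbrs]
    constructor
    · rintro ⟨hwu, hxw⟩
      exact ⟨(w, u), ⟨hwu, rfl, hxw⟩, rfl⟩
    · rintro ⟨f, ⟨hfE, hfu, hfx⟩, rfl⟩
      refine ⟨?_, hfx⟩
      have : f = (f.1, u) := Prod.ext rfl hfu
      rwa [this] at hfE
  have hinj : Set.InjOn (Prod.fst : X × Y → X) ↑(E.filter (fun f => f.2 = u ∧ x < f.1)) := by
    intro f hf g hg hfg
    rw [Finset.mem_coe, Finset.mem_filter] at hf hg
    exact Prod.ext hfg (hf.2.1.trans hg.2.1.symm)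
  unfold tlR
  rw [hset, himg, Finset.card_image_of_injOn hinj]

lemma tlFib_gt {E : Finset (X × Y)} {ord : Y → ℕ} {x : X} {y u : Y}
    (h : ord y < ord u) :
    (E.filter (fun f => tlCross ord (x, y) f ∧ f.2 = u)).card = tlL E x u := by
  have hset : E.filter (fun f => tlCross ord (x, y) f ∧ f.2 = u)
      = E.filter (fun f => f.2 = u ∧ f.1 < x) := by
    apply Finset.filter_congr
    intro f _
    unfold tlCross
    constructor
    · rintro ⟨hc | hc, hu⟩
      · rw [hu] at hc
        exact absurd hc.2 (lt_asymm h)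
      · exact ⟨hu, hc.1⟩
    · rintro ⟨hu, hx⟩
      exact ⟨Or.inr ⟨hx, by rw [hu]; exact h⟩, hu⟩
  have himg : (tlNbrs E u).filter (fun w => w < x)
      = (E.filter (fun f => f.2 = u ∧ f.1 < x)).image Prod.fst := by
    ext w
    simp only [Finset.mem_filter, Finset.mem_image, mem_tlNbrs]
    constructor
    · rintro ⟨hwu, hxw⟩
      exact ⟨(w, u), ⟨hwu, rfl, hxw⟩, rfl⟩
    · rintro ⟨f, ⟨hfE, hfu, hfx⟩, rfl⟩
      refine ⟨?_, hfx⟩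
      have : f = (f.1, u) := Prod.ext rfl hfu
      rwa [this] at hfE
  have hinj : Set.InjOn (Prod.fst : X × Y → X) ↑(E.filter (fun f => f.2 = u ∧ f.1 < x)) := by
    intro f hf g hg hfg
    rw [Finset.mem_coe, Finset.mem_filter] at hf hg
    exact Prod.ext hfg (hf.2.1.trans hg.2.1.symm)
  unfold tlL
  rw [hset, himg, Finset.card_image_of_injOn hinj]

lemma tlFib_self {E : Finset (X × Y)} {ord : Y → ℕ} {x : X} {y : Y} :
    (E.filter (fun f => tlCross ord (x, y) f ∧ f.2 = y)).card = 0 := by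
  rw [Finset.card_eq_zero, Finset.filter_eq_empty_iff]
  rintro f _ ⟨hc, hu⟩
  unfold tlCross at hc
  rw [hu] at hc
  rcases hc with hc | hc
  · exact lt_irrefl _ hc.2
  · exact lt_irrefl _ hc.2

lemma crN_decomp (E : Finset (X × Y)) (ord : Y → ℕ) (e : X × Y) :
    tlCrN E ord e
      = ∑ u ∈ E.image Prod.snd, (E.filter (fun f => tlCross ord e f ∧ f.2 = u)).card := by
  unfold tlCrN
  rw [Finset.card_eq_sum_card_fiberwise
    (f := Prod.snd) (t := E.image Prod.snd)
    (fun f hf => Finset.mem_image_of_mem _ (Finset.mem_filter.mp hf).1)]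
  apply Finset.sum_congr rfl
  intro u _
  rw [Finset.filter_filter]

end TLAux

/-- If the one-sided local crossing number of `(G, <ₓ)` is `k` (every vertex of
`Y` having degree at least 1), then the 2-layer drawing returned by variant `A`
of the median heuristic has local crossing number at most `3k`: variant `A` is a
3-approximation for One-Sided Local Crossing Minimization. -/
theorem variantA_is_3_approximation
    {X Y : Type*} [LinearOrder X]
    (E : Finset (X × Y)) (k : ℕ)
    (hdeg : ∀ y : Y, 1 ≤ tlDeg E y)
    (med heavy : Y → X) (ordA : Y → ℕ)
    (hmed : tlMedianA E med) (hheavy : tlHeavyNbr E med heavy)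
    (hordA : tlVariantA E med heavy ordA)
    (hk : tlOslcr E k) :
    tlLcr E ordA ≤ 3 * k := by
  obtain ⟨⟨σ, hσinj, hσlcr⟩, -⟩ := hk
  have hcrk : ∀ g ∈ E, tlCrN E σ g ≤ k :=
    fun g hg => le_of_le_of_eq (Finset.le_sup hg) hσlcr
  unfold tlLcr
  refine Finset.sup_le ?_
  rintro ⟨x, y⟩ he
  obtain hInj := hordA.1
  obtain hMedOrd := hordA.2.1
  obtain hRankOrd := hordA.2.2.1
  have hxNy : x ∈ tlNbrs E y := mem_tlNbrs.mpr he
  have hNe : (tlNbrs E y).Nonempty := ⟨x, hxNy⟩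
  obtain ⟨hmyN, hyPart, hyRL, hyLR, hyR1, hyL1, hyD2, hyL0, hyR0⟩ :=
    tlMedFacts E med hdeg hmed y
  set M := (tlNbrs E y).max' hNe with hMdef
  set μ := (tlNbrs E y).min' hNe with hμdef
  have hME : (M, y) ∈ E := mem_tlNbrs.mp (Finset.max'_mem _ hNe)
  have hμE : (μ, y) ∈ E := mem_tlNbrs.mp (Finset.min'_mem _ hNe)
  have hmM : med y ≤ M := Finset.le_max' _ _ hmyN
  have hμm : μ ≤ med y := Finset.min'_le _ _ hmyN
  have main : ∃ g₁, g₁ ∈ E ∧ ∃ g₂, g₂ ∈ E ∧ ∀ u : Y,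
      (E.filter (fun f => tlCross ordA (x, y) f ∧ f.2 = u)).card ≤
        (E.filter (fun f => tlCross σ (x, y) f ∧ f.2 = u)).card +
        (E.filter (fun f => tlCross σ g₁ f ∧ f.2 = u)).card +
        (E.filter (fun f => tlCross σ g₂ f ∧ f.2 = u)).card := by
    rcases lt_trichotomy x (med y) with hxm | hxm | hxm
    · -- x left of the median of y : charge twice to (M, y)
      refine ⟨(M, y), hME, (M, y), hME, ?_⟩
      intro u
      by_cases huy : u = y
      · subst huy; rw [tlFib_self]; exact Nat.zero_le _
      obtain ⟨huN, huPart, huRL, huLR, huR1, huL1, huD2, huL0, huR0⟩ :=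
        tlMedFacts E med hdeg hmed u
      rcases lt_trichotomy (ordA u) (ordA y) with hA | hA | hA
      · simp only [tlFib_lt hA]
        have hmuy : med u ≤ med y :=
          le_of_not_gt fun hh => lt_asymm hA (hMedOrd y u hh)
        rcases lt_trichotomy (σ u) (σ y) with hS | hS | hS
        · simp only [tlFib_lt hS]; omega
        · exact absurd (hσinj hS) huy
        · simp only [tlFib_gt hS]
          rcases lt_or_eq_of_le (hmuy.trans hmM) with hc | hc
          · have hg := tlL_gain E huN hc
            have hRx := tlR_le_deg E x u
            omega
          · -- med u = M, i.e. med u = med y = M : tie, forces 2-vertices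
            have hum : med u = med y := le_antisymm hmuy (hmM.trans hc.ge)
            have hrhoy : tlR E (med y) y = 0 := by
              unfold tlR
              rw [Finset.card_eq_zero, Finset.filter_eq_empty_iff]
              intro w hw
              have : med y = M := le_antisymm hmM (hc.symm.trans_le hmuy)
              rw [this]
              exact not_lt.mpr (Finset.le_max' _ _ hw)
            have hlamy : 1 ≤ tlL E (med y) y := by
              unfold tlL
              exact Finset.card_pos.mpr ⟨x, Finset.mem_filter.mpr ⟨hxNy, hxm⟩⟩
            have hdy2 := hyR0 hrhoy hlamy
            have hrky : tlRank E y = 0 := tlRank_of_deg2 hdy2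
            have hrku : tlRank E u = 0 := by
              by_contra hne'
              have h1 : tlRank E y < tlRank E u := by omega
              exact lt_asymm hA (hRankOrd y u hum.symm h1)
            have hdu2 := tlRank_eq_zero hrku
            obtain ⟨hl1, hr0⟩ := huD2 hdu2
            have hLM : tlL E M u = 1 := by rw [← hc]; exact hl1
            have hRx := tlR_le_deg E x u
            omega
      · exact absurd (hInj hA) huy
      · simp only [tlFib_gt hA]
        have hmyu : med y ≤ med u :=
          le_of_not_gt fun hh => lt_asymm hA (hMedOrd u y hh)
        rcases lt_trichotomy (σ u) (σ y) with hS | hS | hS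
        · simp only [tlFib_lt hS]
          have hxmu : x < med u := lt_of_lt_of_le hxm hmyu
          have h1 : tlL E x u ≤ tlL E (med u) u := tlL_mono E u hxmu.le
          have h2 := tlR_gain E huN hxmu
          omega
        · exact absurd (hσinj hS) huy
        · simp only [tlFib_gt hS]; omega
    · -- x = med y : charge to (x, y) and (μ, y)
      refine ⟨(x, y), he, (μ, y), hμE, ?_⟩
      intro u
      by_cases huy : u = y
      · subst huy; rw [tlFib_self]; exact Nat.zero_le _
      obtain ⟨huN, huPart, huRL, huLR, huR1, huL1, huD2, huL0, huR0⟩ :=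
        tlMedFacts E med hdeg hmed u
      rcases lt_trichotomy (ordA u) (ordA y) with hA | hA | hA
      · simp only [tlFib_lt hA]
        have hmuy : med u ≤ med y :=
          le_of_not_gt fun hh => lt_asymm hA (hMedOrd y u hh)
        rcases lt_trichotomy (σ u) (σ y) with hS | hS | hS
        · simp only [tlFib_lt hS]; omega
        · exact absurd (hσinj hS) huy
        · simp only [tlFib_gt hS]
          have hmux : med u ≤ x := hmuy.trans hxm.ge
          rcases lt_or_eq_of_le hmux with hc | hc
          · have h1 := tlL_gain E huN hc
            have h2 : tlR E x u ≤ tlR E (med u) u := tlR_anti E u hc.le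
            omega
          · have hRx : tlR E x u = tlR E (med u) u := by rw [hc]
            have hLx : tlL E x u = tlL E (med u) u := by rw [hc]
            by_cases hq : tlR E (med u) u = tlL E (med u) u + 1
            · have := huR1 hq; omega
            · omega
      · exact absurd (hInj hA) huy
      · simp only [tlFib_gt hA]
        have hmyu : med y ≤ med u :=
          le_of_not_gt fun hh => lt_asymm hA (hMedOrd u y hh)
        have hxmu : x ≤ med u := hxm.le.trans hmyu
        rcases lt_trichotomy (σ u) (σ y) with hS | hS | hS
        · simp only [tlFib_lt hS]
          rcases lt_or_eq_of_le hxmu with hc | hc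
          · have h1 : tlL E x u ≤ tlL E (med u) u := tlL_mono E u hc.le
            have h2 := tlR_gain E huN hc
            omega
          · have hum : med u = med y := by rw [← hc, hxm]
            have hLx : tlL E x u = tlL E (med u) u := by rw [hc]
            have hRx : tlR E x u = tlR E (med u) u := by rw [hc]
            by_cases hdu : tlDeg E u = 2
            · obtain ⟨hl1, hr0⟩ := huD2 hdu
              have hrku := tlRank_of_deg2 hdu
              have hrky0 : tlRank E y = 0 := by
                by_contra hne'
                have h1 : tlRank E u < tlRank E y := by omega
                exact lt_asymm hA (hRankOrd u y hum h1)
              have hdy2 := tlRank_eq_zero hrky0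
              obtain ⟨hly1, hry0⟩ := hyD2 hdy2
              have hpos : 0 < ((tlNbrs E y).filter (fun w => w < med y)).card := by
                unfold tlL at hly1; omega
              obtain ⟨w, hw⟩ := Finset.card_pos.mp hpos
              obtain ⟨hwN, hwlt⟩ := Finset.mem_filter.mp hw
              have hμmu : μ < med u :=
                lt_of_le_of_lt (Finset.min'_le _ _ hwN) (hwlt.trans_eq hum.symm)
              have h2 := tlR_gain E huN hμmu
              omega
            · have hne2 : tlL E (med u) u ≠ tlR E (med u) u + 1 :=
                fun h => hdu (huL1 h)
              omega
        · exact absurd (hσinj hS) huy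
        · simp only [tlFib_gt hS]; omega
    · -- x right of the median of y : charge twice to (μ, y)
      refine ⟨(μ, y), hμE, (μ, y), hμE, ?_⟩
      intro u
      by_cases huy : u = y
      · subst huy; rw [tlFib_self]; exact Nat.zero_le _
      obtain ⟨huN, huPart, huRL, huLR, huR1, huL1, huD2, huL0, huR0⟩ :=
        tlMedFacts E med hdeg hmed u
      rcases lt_trichotomy (ordA u) (ordA y) with hA | hA | hA
      · simp only [tlFib_lt hA]
        have hmuy : med u ≤ med y :=
          le_of_not_gt fun hh => lt_asymm hA (hMedOrd y u hh)
        have hmux : med u < x := lt_of_le_of_lt hmuy hxm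
        rcases lt_trichotomy (σ u) (σ y) with hS | hS | hS
        · simp only [tlFib_lt hS]; omega
        · exact absurd (hσinj hS) huy
        · simp only [tlFib_gt hS]
          have h1 := tlL_gain E huN hmux
          have h2 : tlR E x u ≤ tlR E (med u) u := tlR_anti E u hmux.le
          omega
      · exact absurd (hInj hA) huy
      · simp only [tlFib_gt hA]
        have hmyu : med y ≤ med u :=
          le_of_not_gt fun hh => lt_asymm hA (hMedOrd u y hh)
        rcases lt_trichotomy (σ u) (σ y) with hS | hS | hS
        · simp only [tlFib_lt hS]
          rcases lt_or_eq_of_le (hμm.trans hmyu) with hc | hc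
          · have h1 := tlR_gain E huN hc
            have h2 := tlL_le_deg E x u
            omega
          · exfalso
            have hμmy : μ = med y := le_antisymm hμm (hmyu.trans hc.ge)
            have hlam0 : tlL E (med y) y = 0 := by
              unfold tlL
              rw [Finset.card_eq_zero, Finset.filter_eq_empty_iff]
              intro w hw
              rw [← hμmy]
              exact not_lt.mpr (Finset.min'_le _ _ hw)
            have hdy1 := hyL0 hlam0
            have hcard : (tlNbrs E y).card ≤ 1 := by
              unfold tlDeg at hdy1; omega
            have hxmy : x = med y :=
              (Finset.card_le_one.mp hcard) x hxNy (med y) hmyN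
            rw [hxmy] at hxm
            exact lt_irrefl _ hxm
        · exact absurd (hσinj hS) huy
        · simp only [tlFib_gt hS]; omega
  obtain ⟨g₁, hg₁, g₂, hg₂, hptw⟩ := main
  calc tlCrN E ordA (x, y)
      = ∑ u ∈ E.image Prod.snd,
          (E.filter (fun f => tlCross ordA (x, y) f ∧ f.2 = u)).card :=
        crN_decomp E ordA (x, y)
    _ ≤ ∑ u ∈ E.image Prod.snd,
          ((E.filter (fun f => tlCross σ (x, y) f ∧ f.2 = u)).card +
           (E.filter (fun f => tlCross σ g₁ f ∧ f.2 = u)).card +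
           (E.filter (fun f => tlCross σ g₂ f ∧ f.2 = u)).card) :=
        Finset.sum_le_sum fun u _ => hptw u
    _ = tlCrN E σ (x, y) + tlCrN E σ g₁ + tlCrN E σ g₂ := by
        rw [Finset.sum_add_distrib, Finset.sum_add_distrib,
          ← crN_decomp E σ (x, y), ← crN_decomp E σ g₁, ← crN_decomp E σ g₂]
    _ ≤ k + k + k :=
        add_le_add (add_le_add (hcrk _ he) (hcrk _ hg₁)) (hcrk _ hg₂)
    _ = 3 * k := by ring
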